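/- Let P(·|0) and P(·|1) be product-form probability distributions on {0,1}^N given by P(m|β) = Π_{i=1}^N P_i(m_i | m_1...m_{i-1}, β), where each conditional satisfies |P_i(1 | h, 1) - P_i(1 | h, 0)| ≤ B_i for every history h ∈ {0,1}^{i-1}. Then the L1 distance satisfies Σ_{m ∈ {0,1}^N} |P(m|0) - P(m|1)| ≤ 2 Σ_{i=1}^N B_i. -/

import Mathlib

noncomputable def Pprod (Pcond : List Bool → Bool → ℝ) : (n : ℕ) → (Fin n → Bool) → Bool → ℝ :=
  fun n m β => ∏ i : Fin n,
    (if m i then Pcond ((List.ofFn m).take i.val) β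
     else 1 - Pcond ((List.ofFn m).take i.val) β)

lemma ofFn_snoc' {α : Type*} {n : ℕ} (m : Fin n → α) (b : α) :
    List.ofFn (Fin.snoc m b : Fin (n+1) → α) = List.ofFn m ++ [b] := by
  rw [List.ofFn_succ']
  simp [Fin.snoc_castSucc, List.concat_eq_append]

lemma Pprod_snoc (Pcond : List Bool → Bool → ℝ) (n : ℕ) (m : Fin n → Bool) (b : Bool)
    (β : Bool) :
    Pprod Pcond (n+1) (Fin.snoc m b) β =
      Pprod Pcond n m β *
        (if b then Pcond (List.ofFn m) β else 1 - Pcond (List.ofFn m) β) := by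
  unfold Pprod
  rw [Fin.prod_univ_castSucc]
  congr 1
  · apply Finset.prod_congr rfl
    intro i _
    have h : (i : ℕ) ≤ (List.ofFn m).length := by simp [i.isLt.le]
    rw [ofFn_snoc', Fin.snoc_castSucc, Fin.coe_castSucc,
      List.take_append_of_le_length h]
  · rw [ofFn_snoc', Fin.snoc_last]
    have : (Fin.last n).val = (List.ofFn m).length := by simp
    rw [this, List.take_left]

lemma sum_snoc {n : ℕ} (F : (Fin (n+1) → Bool) → ℝ) :
    ∑ m : Fin (n+1) → Bool, F m
      = ∑ m : Fin n → Bool, ∑ b : Bool, F (Fin.snoc m b) := by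
  have h := Fintype.sum_equiv (Fin.snocEquiv (fun _ : Fin (n+1) => Bool))
    (fun p : Bool × (Fin n → Bool) => F (Fin.snoc p.2 p.1)) F (fun p => rfl)
  rw [← h, Fintype.sum_prod_type, Finset.sum_comm]

lemma Pprod_nonneg (Pcond : List Bool → Bool → ℝ)
    (hrange : ∀ h β, 0 ≤ Pcond h β ∧ Pcond h β ≤ 1)
    (n : ℕ) (m : Fin n → Bool) (β : Bool) : 0 ≤ Pprod Pcond n m β := by
  apply Finset.prod_nonneg
  intro i _
  split
  · exact (hrange _ _).1
  · linarith [(hrange ((List.ofFn m).take i.val) β).2]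

lemma Pprod_sum_one (Pcond : List Bool → Bool → ℝ) (β : Bool) :
    ∀ n : ℕ, ∑ m : Fin n → Bool, Pprod Pcond n m β = 1 := by
  intro n
  induction n with
  | zero => simp [Pprod]
  | succ n ih =>
    rw [sum_snoc]
    have : ∀ m : Fin n → Bool,
        ∑ b : Bool, Pprod Pcond (n+1) (Fin.snoc m b) β = Pprod Pcond n m β := by
      intro m
      rw [Fintype.sum_bool, Pprod_snoc, Pprod_snoc]
      simp
      ring
    rw [Finset.sum_congr rfl (fun m _ => this m), ih]

lemma l1_bound (Pcond : List Bool → Bool → ℝ)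
    (hrange : ∀ h β, 0 ≤ Pcond h β ∧ Pcond h β ≤ 1)
    (B : ℕ → ℝ) :
    ∀ n : ℕ, (∀ h : List Bool, h.length < n → |Pcond h true - Pcond h false| ≤ B h.length) →
    ∑ m : Fin n → Bool, |Pprod Pcond n m false - Pprod Pcond n m true|
      ≤ 2 * ∑ i ∈ Finset.range n, B i := by
  intro n
  induction n with
  | zero => simp [Pprod]
  | succ n ih =>
    intro hB
    rw [sum_snoc]
    have key : ∀ m : Fin n → Bool,
        ∑ b : Bool, |Pprod Pcond (n+1) (Fin.snoc m b) false
                      - Pprod Pcond (n+1) (Fin.snoc m b) true|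
        ≤ |Pprod Pcond n m false - Pprod Pcond n m true|
          + 2 * (Pprod Pcond n m true * B n) := by
      intro m
      simp only [Pprod_snoc]
      rw [Fintype.sum_bool]
      have hlen : (List.ofFn m).length = n := by simp
      set p0 := Pcond (List.ofFn m) false with hp0
      set p1 := Pcond (List.ofFn m) true with hp1
      set Q0 := Pprod Pcond n m false
      set Q1 := Pprod Pcond n m true
      have hQ1 : 0 ≤ Q1 := Pprod_nonneg Pcond hrange n m true
      have hBd : |p1 - p0| ≤ B n := by
        have := hB (List.ofFn m) (by omega)
        rwa [hlen] at this
      have h0 := hrange (List.ofFn m) false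
      have h1 := hrange (List.ofFn m) true
      simp only [if_true, if_false]
      -- |Q0 * p0 - Q1 * p1| + |Q0*(1-p0) - Q1*(1-p1)| ≤ |Q0 - Q1| + 2*(Q1*|p1-p0|)
      have e1 : Q0 * p0 - Q1 * p1 = (Q0 - Q1) * p0 + Q1 * (p0 - p1) := by ring
      have e2 : Q0 * (1 - p0) - Q1 * (1 - p1) = (Q0 - Q1) * (1 - p0) + Q1 * (p1 - p0) := by
        ring
      calc |Q0 * p0 - Q1 * p1| + |Q0 * (1 - p0) - Q1 * (1 - p1)|
          ≤ (|Q0 - Q1| * p0 + Q1 * |p0 - p1|)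
            + (|Q0 - Q1| * (1 - p0) + Q1 * |p1 - p0|) := by
            rw [e1, e2]
            have a1 : |(Q0 - Q1) * p0 + Q1 * (p0 - p1)|
                ≤ |Q0 - Q1| * p0 + Q1 * |p0 - p1| := by
              refine (abs_add_le _ _).trans ?_
              rw [abs_mul, abs_mul, abs_of_nonneg h0.1, abs_of_nonneg hQ1]
            have a2 : |(Q0 - Q1) * (1 - p0) + Q1 * (p1 - p0)|
                ≤ |Q0 - Q1| * (1 - p0) + Q1 * |p1 - p0| := by
              refine (abs_add_le _ _).trans ?_
              rw [abs_mul, abs_mul, abs_of_nonneg (by linarith [h0.2] : (0:ℝ) ≤ 1 - p0),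
                abs_of_nonneg hQ1]
            linarith
        _ = |Q0 - Q1| + 2 * (Q1 * |p1 - p0|) := by
            rw [abs_sub_comm p0 p1]; ring
        _ ≤ |Q0 - Q1| + 2 * (Q1 * B n) := by
            have := mul_le_mul_of_nonneg_left hBd hQ1
            linarith
    calc ∑ m : Fin n → Bool, ∑ b : Bool,
            |Pprod Pcond (n+1) (Fin.snoc m b) false - Pprod Pcond (n+1) (Fin.snoc m b) true|
        ≤ ∑ m : Fin n → Bool,
            (|Pprod Pcond n m false - Pprod Pcond n m true|
              + 2 * (Pprod Pcond n m true * B n)) :=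
          Finset.sum_le_sum (fun m _ => key m)
      _ = (∑ m : Fin n → Bool, |Pprod Pcond n m false - Pprod Pcond n m true|)
            + 2 * ((∑ m : Fin n → Bool, Pprod Pcond n m true) * B n) := by
          rw [Finset.sum_add_distrib, ← Finset.mul_sum, ← Finset.sum_mul]
      _ ≤ 2 * ∑ i ∈ Finset.range n, B i + 2 * (1 * B n) := by
          have h1 := ih (fun h hh => hB h (by omega))
          rw [Pprod_sum_one]
          linarith
      _ = 2 * ∑ i ∈ Finset.range (n+1), B i := by
          rw [Finset.sum_range_succ]; ring

/-- For product-form distributions P(m|β) = ∏ᵢ Pᵢ(mᵢ|history,β) on {0,1}^N with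
|Pᵢ(1|h,1) - Pᵢ(1|h,0)| ≤ B(h.length) for all relevant histories h, the L1
distance satisfies ∑ₘ |P(m|0)-P(m|1)| ≤ 2 ∑_{i<N} B(i). -/
theorem stmt_14 (N : ℕ) (Pcond : List Bool → Bool → ℝ)
    (hrange : ∀ h β, 0 ≤ Pcond h β ∧ Pcond h β ≤ 1)
    (B : ℕ → ℝ)
    (hB : ∀ h : List Bool, h.length < N →
      |Pcond h true - Pcond h false| ≤ B h.length)
    (Pm : (Fin N → Bool) → Bool → ℝ)
    (hPm : ∀ m β, Pm m β = ∏ i : Fin N,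
      (if m i then Pcond ((List.ofFn m).take i.val) β
       else 1 - Pcond ((List.ofFn m).take i.val) β)) :
    ∑ m : Fin N → Bool, |Pm m false - Pm m true|
      ≤ 2 * ∑ i ∈ Finset.range N, B i := by
  have : ∀ m β, Pm m β = Pprod Pcond N m β := fun m β => hPm m β
  simp only [this]
  exact l1_bound Pcond hrange B N hB
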